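/- Let (η₁, η₂, η₃) be a centered Gaussian vector with nonsingular covariance matrix G such that E[η₁η₂]·E[η₂η₃]·E[η₃η₁] < 0. Then for no signature matrix S (diagonal with entries ±1) is the matrix S G⁻¹ S an M-matrix; consequently (η₁², η₂², η₃²) is not infinitely divisible. -/
import Mathlib


open MeasureTheory

/-- An `M`-matrix: nonpositive off-diagonal entries, nonsingular,
with entrywise nonnegative inverse. -/
def IsMMatrix (A : Matrix (Fin 3) (Fin 3) ℝ) : Prop :=
  (∀ i j, i ≠ j → A i j ≤ 0) ∧ IsUnit A.det ∧ ∀ i j, 0 ≤ A⁻¹ i j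

/-- If a centered vector `(η₁, η₂, η₃)` has nonsingular covariance matrix `G`
with `E[η₁η₂]·E[η₂η₃]·E[η₃η₁] < 0`, then for no signature matrix `S` is
`S G⁻¹ S` an `M`-matrix (so by Bapat's criterion the squared Gaussian vector
with this covariance is not infinitely divisible). -/
theorem no_signature_mMatrix_of_neg_product
    {Ω : Type*} [MeasureSpace Ω] (P : Measure Ω) [IsProbabilityMeasure P]
    (η : Fin 3 → Ω → ℝ) (hcent : ∀ i, ∫ ω, η i ω ∂P = 0)
    (G : Matrix (Fin 3) (Fin 3) ℝ)
    (hG : ∀ i j, G i j = ∫ ω, η i ω * η j ω ∂P)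
    (hdet : IsUnit G.det)
    (hneg : G 0 1 * G 1 2 * G 2 0 < 0) :
    ¬ ∃ s : Fin 3 → ℝ, (∀ i, s i = 1 ∨ s i = -1) ∧
      IsMMatrix (Matrix.diagonal s * G⁻¹ * Matrix.diagonal s) := by
  rintro ⟨s, hs, _, _, hinv⟩
  have hss : ∀ i, s i * s i = 1 := by
    intro i; rcases hs i with h | h <;> simp [h]
  have hSS : Matrix.diagonal s * Matrix.diagonal s = 1 := by
    rw [Matrix.diagonal_mul_diagonal]
    ext i j
    by_cases h : i = j <;> simp [Matrix.diagonal, Matrix.one_apply, h, hss]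
  have hinvEq : (Matrix.diagonal s * G⁻¹ * Matrix.diagonal s)⁻¹ =
      Matrix.diagonal s * G * Matrix.diagonal s := by
    apply Matrix.inv_eq_right_inv
    calc Matrix.diagonal s * G⁻¹ * Matrix.diagonal s *
          (Matrix.diagonal s * G * Matrix.diagonal s)
        = Matrix.diagonal s * (G⁻¹ * (Matrix.diagonal s * Matrix.diagonal s) * G) *
            Matrix.diagonal s := by simp only [Matrix.mul_assoc]
      _ = 1 := by rw [hSS, mul_one, Matrix.nonsing_inv_mul G hdet, mul_one, hSS]
  have key : ∀ i j, 0 ≤ s i * G i j * s j := by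
    intro i j
    have := hinv i j
    rw [hinvEq] at this
    simpa [Matrix.mul_apply, Matrix.diagonal, Finset.sum_ite_eq, Finset.sum_ite_eq',
      mul_comm, mul_assoc, mul_left_comm] using this
  have h01 := key 0 1
  have h12 := key 1 2
  have h20 := key 2 0
  rcases hs 0 with h0 | h0 <;> rcases hs 1 with h1 | h1 <;> rcases hs 2 with h2 | h2 <;>
    rw [h0, h1] at h01 <;> rw [h1, h2] at h12 <;> rw [h2, h0] at h20 <;>
    nlinarith [mul_nonneg (mul_nonneg h01 h12) h20]
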